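/- Let X be a topological space with at least 3 points. Then X is completely metrizable if and only if for every x ∈ X the subspace X \ {x} is completely metrizable. -/

import Mathlib

/-- A topological space is completely metrizable if its topology is induced by a
complete metric. -/
def IsCompletelyMetrizable (X : Type u) [t : TopologicalSpace X] : Prop :=
  ∃ m : MetricSpace X, m.toUniformSpace.toTopologicalSpace = t ∧
    @CompleteSpace X m.toUniformSpace


section Helpers
open Set Filter Metric Topology


set_option linter.unusedSectionVars false
variable {X : Type u} [t : TopologicalSpace X]

open scoped Classical in
/-- junk-extension of the metric on `{a}ᶜ` to all of `X` -/
noncomputable def edd (a : X) (m : MetricSpace ({a}ᶜ : Set X)) (x y : X) : ℝ :=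
  if h : x ∈ ({a}ᶜ : Set X) ∧ y ∈ ({a}ᶜ : Set X) then @dist _ m.toDist ⟨x, h.1⟩ ⟨y, h.2⟩ else 0

/-- the one-point-extension distance -/
noncomputable def DD (a : X) (m : MetricSpace ({a}ᶜ : Set X)) (f : X → ℝ) (x y : X) : ℝ :=
  min (edd a m x y + |f x - f y|) (f x + f y)

variable {a : X} {m : MetricSpace ({a}ᶜ : Set X)} {f : X → ℝ}

lemma edd_eq (x y : ({a}ᶜ : Set X)) : edd a m x.1 y.1 = @dist _ m.toDist x y := by
  rw [edd, dif_pos ⟨x.2, y.2⟩]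

lemma edd_nonneg (x y : X) : 0 ≤ edd a m x y := by
  rw [edd]; split
  · exact @dist_nonneg _ m.toPseudoMetricSpace _ _
  · exact le_refl 0

lemma edd_comm (x y : X) : edd a m x y = edd a m y x := by
  rw [edd, edd]
  rcases Classical.em (x ∈ ({a}ᶜ : Set X) ∧ y ∈ ({a}ᶜ : Set X)) with h | h
  · rw [dif_pos h, dif_pos ⟨h.2, h.1⟩, @dist_comm _ m.toPseudoMetricSpace]
  · rw [dif_neg h, dif_neg (fun h' => h ⟨h'.2, h'.1⟩)]

lemma edd_self (x : X) : edd a m x x = 0 := by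
  rw [edd]; split
  · exact @dist_self _ m.toPseudoMetricSpace _
  · rfl

lemma edd_triangle {y : X} (hy : y ∈ ({a}ᶜ : Set X)) (x z : X) :
    edd a m x z ≤ edd a m x y + edd a m y z := by
  by_cases hx : x ∈ ({a}ᶜ : Set X)
  · by_cases hz : z ∈ ({a}ᶜ : Set X)
    · rw [edd, edd, edd, dif_pos ⟨hx, hz⟩, dif_pos ⟨hx, hy⟩, dif_pos ⟨hy, hz⟩]
      exact @dist_triangle _ m.toPseudoMetricSpace ⟨x, hx⟩ ⟨y, hy⟩ ⟨z, hz⟩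
    · rw [edd, dif_neg (fun h => hz h.2)]
      exact add_nonneg (edd_nonneg _ _) (edd_nonneg _ _)
  · rw [edd, dif_neg (fun h => hx h.1)]
    exact add_nonneg (edd_nonneg _ _) (edd_nonneg _ _)

lemma DD_comm (x y : X) : DD a m f x y = DD a m f y x := by
  rw [DD, DD, edd_comm, abs_sub_comm, add_comm (f x)]

lemma DD_self (x : X) (hf0 : ∀ x, 0 ≤ f x) : DD a m f x x = 0 := by
  rw [DD, edd_self, sub_self, abs_zero, add_zero]
  exact min_eq_left (by linarith [hf0 x]) 

lemma DD_nonneg (hf0 : ∀ x, 0 ≤ f x) (x y : X) : 0 ≤ DD a m f x y :=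
  le_min (add_nonneg (edd_nonneg _ _) (abs_nonneg _)) (add_nonneg (hf0 x) (hf0 y))

lemma DD_xa (hf0 : ∀ x, 0 ≤ f x) (hfa : f a = 0) (x : X) : DD a m f x a = f x := by
  rw [DD, edd, dif_neg (fun h => h.2 rfl), hfa, sub_zero, add_zero, zero_add,
    abs_of_nonneg (hf0 x), min_self]

lemma DD_ax (hf0 : ∀ x, 0 ≤ f x) (hfa : f a = 0) (y : X) : DD a m f a y = f y := by
  rw [DD_comm, DD_xa hf0 hfa]

lemma DD_le_add (x y : X) : DD a m f x y ≤ f x + f y := min_le_right _ _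

lemma f_le_DD_add (hf0 : ∀ x, 0 ≤ f x) (x y : X) : f x ≤ DD a m f x y + f y := by
  rw [DD]
  rcases min_cases (edd a m x y + |f x - f y|) (f x + f y) with ⟨h, -⟩ | ⟨h, -⟩ <;> rw [h]
  · linarith [le_abs_self (f x - f y), edd_nonneg (a := a) (m := m) x y]
  · linarith [abs_nonneg (f x - f y), edd_nonneg (a := a) (m := m) x y, hf0 y]

lemma DD_triangle (hf0 : ∀ x, 0 ≤ f x) (hfa : f a = 0) (x y z : X) :
    DD a m f x z ≤ DD a m f x y + DD a m f y z := by
  by_cases hy : y = a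
  · subst hy
    rw [DD_xa hf0 hfa, DD_ax hf0 hfa]
    exact DD_le_add x z
  · have h1 : |f x - f z| ≤ |f x - f y| + |f y - f z| := abs_sub_le _ _ _
    have h2 := edd_triangle (m := m) (y := y) hy x z
    rw [DD]
    rcases min_cases (edd a m x y + |f x - f y|) (f x + f y) with ⟨hxy, -⟩ | ⟨hxy, -⟩ <;>
      rcases min_cases (edd a m y z + |f y - f z|) (f y + f z) with ⟨hyz, -⟩ | ⟨hyz, -⟩ <;>
      rw [DD, DD, hxy, hyz]
    · refine le_trans (min_le_left _ _) ?_; linarith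
    · refine le_trans (min_le_right _ _) ?_
      linarith [le_abs_self (f x - f y), edd_nonneg (a := a) (m := m) x y,
        edd_nonneg (a := a) (m := m) y z]
    · refine le_trans (min_le_right _ _) ?_
      linarith [neg_abs_le (f y - f z), edd_nonneg (a := a) (m := m) x y,
        edd_nonneg (a := a) (m := m) y z]
    · refine le_trans (min_le_right _ _) ?_; linarith [hf0 y]

lemma DD_eq_zero (hf0 : ∀ x, 0 ≤ f x) (hfa : f a = 0) (hfa' : ∀ x, f x = 0 → x = a) (x y : X)
    (h : DD a m f x y = 0) : x = y := by
  rw [DD] at h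
  rcases min_eq_iff.1 h with ⟨h, -⟩ | ⟨h, -⟩
  · have he : edd a m x y = 0 ∧ |f x - f y| = 0 :=
      (add_eq_zero_iff_of_nonneg (edd_nonneg _ _) (abs_nonneg _)).1 h
    have hfxy : f x = f y := by have := abs_eq_zero.1 he.2; linarith
    by_cases hx : x = a
    · subst hx
      exact (hfa' y (by rw [← hfxy, hfa])).symm
    · by_cases hy : y = a
      · exact absurd (hfa' x (by rw [hfxy, hy, hfa])) hx
      · have : (⟨x, hx⟩ : ({a}ᶜ : Set X)) = ⟨y, hy⟩ := by
          refine @eq_of_dist_eq_zero _ m _ _ ?_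
          rw [← edd_eq ⟨x, hx⟩ ⟨y, hy⟩]; exact he.1
        exact Subtype.ext_iff.1 this
  · have hx0 : f x = 0 := le_antisymm (by linarith [hf0 y]) (hf0 x)
    have hy0 : f y = 0 := le_antisymm (by linarith [hf0 x]) (hf0 y)
    rw [hfa' x hx0, hfa' y hy0]

lemma DD_lt_branch {x y : X} {r : ℝ} (hr : r ≤ f x + f y) (h : DD a m f x y < r) :
    edd a m x y + |f x - f y| < r := by
  rw [DD] at h
  rcases min_lt_iff.1 h with h' | h'
  · exact h'
  · exact absurd hr (not_le.2 h')

lemma DD_le_branch (x y : X) : DD a m f x y ≤ edd a m x y + |f x - f y| := by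
  rw [DD]; exact min_le_left _ _

end Helpers

lemma icm_t1 {Y : Type u} (ty : TopologicalSpace Y) (h : IsCompletelyMetrizable Y) :
    T1Space Y := by
  obtain ⟨m, hm, -⟩ := h; subst hm; letI := m; infer_instance

lemma icm_t2 {Y : Type u} (ty : TopologicalSpace Y) (h : IsCompletelyMetrizable Y) :
    T2Space Y := by
  obtain ⟨m, hm, -⟩ := h; subst hm; letI := m; infer_instance

lemma icm_card {X : Type u} [tX : TopologicalSpace X] (h : IsCompletelyMetrizable X) (x : X) :
    IsCompletelyMetrizable ({x}ᶜ : Set X) := by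
  obtain ⟨m, hm, hc⟩ := h
  subst hm
  letI := m
  haveI := hc
  let s : TopologicalSpace.Opens X := ⟨{x}ᶜ, isOpen_compl_singleton⟩
  exact ⟨(inferInstance : MetricSpace (TopologicalSpace.Opens.CompleteCopy s)), rfl,
    (inferInstance : CompleteSpace (TopologicalSpace.Opens.CompleteCopy s))⟩

section Main
open Set Filter Metric Topology

theorem extension {X : Type u} [t : TopologicalSpace X] {a : X} (ha : IsClosed ({a} : Set X))
    (m : MetricSpace ({a}ᶜ : Set X))
    (hm : m.toUniformSpace.toTopologicalSpace = instTopologicalSpaceSubtype)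
    (hcomp : @CompleteSpace _ m.toUniformSpace)
    (f : X → ℝ) (hfc : Continuous f) (hf0 : ∀ x, 0 ≤ f x) (hfa : f a = 0)
    (hfa' : ∀ x, f x = 0 → x = a)
    (hbasis : ∀ V ∈ 𝓝 a, ∃ r > 0, f ⁻¹' Set.Iio r ⊆ V) :
    IsCompletelyMetrizable X := by
  have fpos : ∀ x : X, x ≠ a → 0 < f x := fun x hx =>
    lt_of_le_of_ne (hf0 x) (fun h => hx (hfa' x h.symm))
  -- the topology characterization
  have hopen : ∀ s : Set X, IsOpen s ↔ ∀ x ∈ s, ∃ ε > 0, ∀ y, DD a m f x y < ε → y ∈ s := by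
    intro s
    constructor
    · intro hs x hx
      by_cases hxa : x = a
      · subst hxa
        obtain ⟨r, hr, hsub⟩ := hbasis s (hs.mem_nhds hx)
        exact ⟨r, hr, fun y hy => hsub (by
          rw [DD_ax hf0 hfa] at hy; exact hy)⟩
      · have hx' : x ∈ ({a}ᶜ : Set X) := hxa
        have h1 : IsOpen ((Subtype.val : ({a}ᶜ : Set X) → X) ⁻¹' s) :=
          hs.preimage continuous_subtype_val
        have h2 : @IsOpen _ m.toUniformSpace.toTopologicalSpace
            ((Subtype.val : ({a}ᶜ : Set X) → X) ⁻¹' s) := by rw [hm]; exact h1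
        obtain ⟨ε, ε0, hball⟩ :=
          (@Metric.isOpen_iff _ m.toPseudoMetricSpace _).1 h2 ⟨x, hx'⟩ hx
        refine ⟨min ε (f x), lt_min ε0 (fpos x hxa), fun y hy => ?_⟩
        have hya : y ≠ a := by
          rintro rfl
          rw [DD_xa hf0 hfa] at hy
          exact absurd hy (not_lt.2 (min_le_right _ _))
        have hy' : y ∈ ({a}ᶜ : Set X) := hya
        have hbr : edd a m x y + |f x - f y| < min ε (f x) := by
          refine DD_lt_branch ?_ hy
          calc min ε (f x) ≤ f x := min_le_right _ _
            _ ≤ f x + f y := by linarith [hf0 y]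
        have hd : @dist _ m.toDist ⟨x, hx'⟩ ⟨y, hy'⟩ < ε := by
          rw [← edd_eq ⟨x, hx'⟩ ⟨y, hy'⟩]
          calc edd a m x y ≤ edd a m x y + |f x - f y| := le_add_of_nonneg_right (abs_nonneg _)
            _ < min ε (f x) := hbr
            _ ≤ ε := min_le_left _ _
        exact hball (by
          rw [@Metric.mem_ball _ m.toPseudoMetricSpace, @dist_comm _ m.toPseudoMetricSpace]
          exact hd)
    · intro h
      rw [isOpen_iff_mem_nhds]
      intro x hx
      obtain ⟨ε, ε0, hball⟩ := h x hx
      by_cases hxa : x = a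
      · subst hxa
        refine mem_nhds_iff.2 ⟨f ⁻¹' Iio ε, fun y hy => ?_, isOpen_Iio.preimage hfc, ?_⟩
        · exact hball y (by rw [DD_ax hf0 hfa]; exact hy)
        · simp [hfa, ε0]
      · have hx' : x ∈ ({a}ᶜ : Set X) := hxa
        set O₁ : Set ({a}ᶜ : Set X) := @Metric.ball _ m.toPseudoMetricSpace ⟨x, hx'⟩ (ε/2) with hO₁def
        have hO₁ : IsOpen O₁ := by
          rw [← hm]; exact @Metric.isOpen_ball _ m.toPseudoMetricSpace _ _
        set O₂ : Set ({a}ᶜ : Set X) := (fun q : ({a}ᶜ : Set X) => |f x - f q.1|) ⁻¹' Iio (ε/2)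
          with hO₂def
        have hO₂ : IsOpen O₂ :=
          isOpen_Iio.preimage ((continuous_const.sub (hfc.comp continuous_subtype_val)).abs)
        have hOopen : IsOpen (Subtype.val '' (O₁ ∩ O₂)) :=
          (ha.isOpen_compl).isOpenMap_subtype_val _ (hO₁.inter hO₂)
        refine mem_nhds_iff.2 ⟨Subtype.val '' (O₁ ∩ O₂), ?_, hOopen, ?_⟩
        · rintro y ⟨q, ⟨hq1, hq2⟩, rfl⟩
          refine hball _ ?_
          have hd : @dist _ m.toDist ⟨x, hx'⟩ q < ε/2 := by
            rw [@dist_comm _ m.toPseudoMetricSpace]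
            exact hq1
          have : edd a m x q.1 < ε/2 := by rw [edd_eq ⟨x, hx'⟩ q]; exact hd
          have h2 : |f x - f q.1| < ε/2 := hq2
          calc DD a m f x q.1 ≤ edd a m x q.1 + |f x - f q.1| := DD_le_branch x q.1
            _ < ε/2 + ε/2 := by linarith
            _ = ε := by ring
        · exact ⟨⟨x, hx'⟩, ⟨by
            rw [hO₁def, @Metric.mem_ball _ m.toPseudoMetricSpace,
              @dist_self _ m.toPseudoMetricSpace]
            linarith, by
            rw [hO₂def]; simp [half_pos ε0]⟩, rfl⟩
  -- construct the metric
  set DM : MetricSpace X := MetricSpace.ofDistTopology (DD a m f) (fun x => DD_self x hf0)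
    DD_comm (DD_triangle hf0 hfa) hopen (DD_eq_zero hf0 hfa hfa') with hDM
  refine ⟨DM, rfl, ?_⟩
  -- completeness
  refine @Metric.complete_of_cauchySeq_tendsto _ DM.toPseudoMetricSpace (fun u hu => ?_)
  have hu' := (@Metric.cauchySeq_iff X ℕ DM.toPseudoMetricSpace _ _ u).1 hu
  by_cases hA : ∃ c > 0, ∀ᶠ n in atTop, c ≤ f (u n)
  · obtain ⟨c, hc, hev⟩ := hA
    obtain ⟨N₀, hN₀⟩ := eventually_atTop.1 hev
    have hne : ∀ n : ℕ, u (n + N₀) ∈ ({a}ᶜ : Set X) := by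
      intro n
      have := hN₀ (n + N₀) (by omega)
      intro h
      rw [mem_singleton_iff.1 h] at this
      rw [hfa] at this
      linarith
    set v : ℕ → ({a}ᶜ : Set X) := fun n => ⟨u (n + N₀), hne n⟩ with hv
    have hvC : @CauchySeq _ ℕ m.toUniformSpace _ v := by
      rw [@Metric.cauchySeq_iff _ ℕ m.toPseudoMetricSpace _ _ v]
      intro ε ε0
      obtain ⟨N, hN⟩ := hu' (min ε c) (lt_min ε0 hc)
      refine ⟨N, fun p hp q hq => ?_⟩
      have hDD : DD a m f (u (p + N₀)) (u (q + N₀)) < min ε c :=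
        hN _ (le_trans hp (by omega)) _ (le_trans hq (by omega))
      have hbr : edd a m (u (p + N₀)) (u (q + N₀)) + |f (u (p + N₀)) - f (u (q + N₀))| <
          min ε c := by
        refine DD_lt_branch ?_ hDD
        have h1 := hN₀ (p + N₀) (by omega)
        have h2 := hN₀ (q + N₀) (by omega)
        calc min ε c ≤ c := min_le_right _ _
          _ ≤ c + c := by linarith
          _ ≤ _ := add_le_add h1 h2
      have : edd a m (u (p + N₀)) (u (q + N₀)) < ε :=
        lt_of_le_of_lt (le_add_of_nonneg_right (abs_nonneg _))
          (lt_of_lt_of_le hbr (min_le_left _ _))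
      rw [edd_eq (v p) (v q)] at this
      exact this
    obtain ⟨l, hl⟩ := @cauchySeq_tendsto_of_complete _ ℕ m.toUniformSpace _ hcomp v hvC
    rw [hm] at hl
    have hl' : Tendsto (fun n => u (n + N₀)) atTop (𝓝 l.1) :=
      ((continuous_subtype_val.tendsto l).comp hl : _)
    exact ⟨l.1, (tendsto_add_atTop_iff_nat N₀).1 hl'⟩
  · push_neg at hA
    refine ⟨a, (@Metric.tendsto_atTop X ℕ DM.toPseudoMetricSpace _ _ u a).2 fun ε ε0 => ?_⟩
    obtain ⟨N, hN⟩ := hu' (ε/2) (half_pos ε0)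
    have hfreq : ∃ᶠ n in atTop, f (u n) < ε/2 := by
      have h' := hA (ε/2) (half_pos ε0)
      simpa using h'
    obtain ⟨M, hM1, hM2⟩ := (hfreq.and_eventually (eventually_ge_atTop N)).exists
    refine ⟨N, fun n hn => ?_⟩
    have h3 : DD a m f (u n) (u M) < ε/2 := hN n hn M hM2
    have h4 : f (u n) < ε := by
      have h5 := f_le_DD_add (m := m) hf0 (u n) (u M)
      linarith
    show DD a m f (u n) a < ε
    rw [DD_xa hf0 hfa]
    exact h4


lemma t1_of_cards {X : Type u} [t : TopologicalSpace X] (hcard : 3 ≤ Cardinal.mk X)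
    (h : ∀ x : X, IsCompletelyMetrizable ({x}ᶜ : Set X)) (x : X) :
    IsClosed ({x} : Set X) := by
  haveI : Nontrivial X := Cardinal.one_lt_iff_nontrivial.1 (lt_of_lt_of_le (by norm_num) hcard)
  obtain ⟨z, hz⟩ := exists_ne x
  obtain ⟨w, hwx, hwz⟩ := Cardinal.three_le hcard x z
  have key : ∀ p : X, p ≠ x → ∃ C : Set X, IsClosed C ∧ x ∈ C ∧ ∀ y ∈ C, y = x ∨ y = p := by
    intro p hp
    haveI : T1Space ({p}ᶜ : Set X) := icm_t1 _ (h p)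
    have hxp : x ∈ ({p}ᶜ : Set X) := fun hh => hp (mem_singleton_iff.1 hh).symm
    have c1 : IsClosed ({(⟨x, hxp⟩ : ({p}ᶜ : Set X))} : Set ({p}ᶜ : Set X)) := isClosed_singleton
    rw [isClosed_induced_iff] at c1
    obtain ⟨C, hC, hCpre⟩ := c1
    refine ⟨C, hC, ?_, ?_⟩
    · have : (⟨x, hxp⟩ : ({p}ᶜ : Set X)) ∈ Subtype.val ⁻¹' C := by rw [hCpre]; rfl
      exact this
    · intro y hy
      by_cases hyp : y = p
      · exact Or.inr hyp
      · have hy' : y ∈ ({p}ᶜ : Set X) := fun hh => hyp (mem_singleton_iff.1 hh)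
        have : (⟨y, hy'⟩ : ({p}ᶜ : Set X)) ∈ Subtype.val ⁻¹' C := hy
        rw [hCpre] at this
        exact Or.inl (congrArg Subtype.val this)
  obtain ⟨C, hC, hxC, hCsub⟩ := key z hz
  obtain ⟨D, hD, hxD, hDsub⟩ := key w hwx
  have : ({x} : Set X) = C ∩ D := by
    ext y
    constructor
    · rintro rfl; exact ⟨hxC, hxD⟩
    · rintro ⟨hyC, hyD⟩
      rcases hCsub y hyC with h1 | h1
      · exact h1
      · rcases hDsub y hyD with h2 | h2
        · exact h2
        · exact absurd (h1.symm.trans h2).symm hwz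
  rw [this]
  exact hC.inter hD

theorem bwd {X : Type u} [t : TopologicalSpace X] (hcard : 3 ≤ Cardinal.mk X)
    (h : ∀ x : X, IsCompletelyMetrizable ({x}ᶜ : Set X)) : IsCompletelyMetrizable X := by
  classical
  haveI : Nontrivial X := Cardinal.one_lt_iff_nontrivial.1 (lt_of_lt_of_le (by norm_num) hcard)
  have hT1 : ∀ x : X, IsClosed ({x} : Set X) := t1_of_cards hcard h
  obtain ⟨a, b, hab⟩ := exists_pair_ne X
  -- Hausdorff separation of a and b
  obtain ⟨c, hca, hcb⟩ := Cardinal.three_le hcard a b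
  have sep : ∃ A B : Set X, IsOpen A ∧ IsOpen B ∧ a ∈ A ∧ b ∈ B ∧ Disjoint A B := by
    haveI : T2Space ({c}ᶜ : Set X) := icm_t2 _ (h c)
    have ha' : a ∈ ({c}ᶜ : Set X) := fun hh => hca (mem_singleton_iff.1 hh).symm
    have hb' : b ∈ ({c}ᶜ : Set X) := fun hh => hcb (mem_singleton_iff.1 hh).symm
    obtain ⟨U, V, hU, hV, haU, hbV, hUV⟩ :=
      t2_separation (show (⟨a, ha'⟩ : ({c}ᶜ : Set X)) ≠ ⟨b, hb'⟩ by
        intro hh; exact hab (congrArg Subtype.val hh))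
    have hopen : IsOpen (({c}ᶜ : Set X)) := (hT1 c).isOpen_compl
    exact ⟨Subtype.val '' U, Subtype.val '' V, hopen.isOpenMap_subtype_val _ hU,
      hopen.isOpenMap_subtype_val _ hV, ⟨_, haU, rfl⟩, ⟨_, hbV, rfl⟩,
      Set.disjoint_image_of_injective Subtype.val_injective hUV⟩
  obtain ⟨A, B, hA, hB, haA, hbB, hAB⟩ := sep
  -- metric on X \ {b}
  obtain ⟨ρ, hρ, -⟩ := h b
  have hab' : a ∈ ({b}ᶜ : Set X) := fun hh => hab (mem_singleton_iff.1 hh)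
  -- a small ball around a inside A
  have hpre : @IsOpen _ ρ.toUniformSpace.toTopologicalSpace
      ((Subtype.val : ({b}ᶜ : Set X) → X) ⁻¹' A) := by
    rw [hρ]; exact hA.preimage continuous_subtype_val
  obtain ⟨ε, ε0, hball⟩ := (@Metric.isOpen_iff _ ρ.toPseudoMetricSpace _).1 hpre ⟨a, hab'⟩ haA
  -- the distance-to-a function
  set f : X → ℝ := fun x =>
    if hx : x ∈ ({b}ᶜ : Set X) then min ε (@dist _ ρ.toDist ⟨x, hx⟩ ⟨a, hab'⟩) else ε with hf
  have hf0 : ∀ x, 0 ≤ f x := by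
    intro x; rw [hf]; dsimp only; split
    · exact le_min ε0.le (@dist_nonneg _ ρ.toPseudoMetricSpace _ _)
    · exact ε0.le
  have hfa : f a = 0 := by
    rw [hf]; dsimp only; rw [dif_pos hab', @dist_self _ ρ.toPseudoMetricSpace]
    exact min_eq_right ε0.le
  have hfa' : ∀ x, f x = 0 → x = a := by
    intro x hx
    rw [hf] at hx; dsimp only at hx
    by_cases hxb : x ∈ ({b}ᶜ : Set X)
    · rw [dif_pos hxb] at hx
      have hd : @dist _ ρ.toDist ⟨x, hxb⟩ ⟨a, hab'⟩ = 0 := by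
        rcases min_eq_iff.1 hx with ⟨h1, -⟩ | ⟨h1, -⟩
        · exact absurd h1 ε0.ne'
        · exact h1
      have := @eq_of_dist_eq_zero _ ρ _ _ hd
      exact congrArg Subtype.val this
    · rw [dif_neg hxb] at hx
      exact absurd hx ε0.ne'
  -- f is constantly ε on B
  have hfB : EqOn f (fun _ => ε) B := by
    intro y hyB
    rw [hf]; dsimp only
    by_cases hyb : y ∈ ({b}ᶜ : Set X)
    · rw [dif_pos hyb]
      refine min_eq_left ?_
      by_contra hlt
      push_neg at hlt
      have : (⟨y, hyb⟩ : ({b}ᶜ : Set X)) ∈ @Metric.ball _ ρ.toPseudoMetricSpace ⟨a, hab'⟩ ε := hlt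
      have hyA : y ∈ A := hball this
      exact (hAB.ne_of_mem hyA hyB) rfl
    · rw [dif_neg hyb]
  -- continuity of f
  have hrest : Continuous (({b}ᶜ : Set X).restrict f) := by
    have hdc : @Continuous _ _ ρ.toUniformSpace.toTopologicalSpace _
        (fun q : ({b}ᶜ : Set X) => @dist _ ρ.toDist q ⟨a, hab'⟩) := by
      exact @Continuous.dist _ _ ρ.toPseudoMetricSpace ρ.toUniformSpace.toTopologicalSpace
        _ _ (@continuous_id _ ρ.toUniformSpace.toTopologicalSpace)
        (@continuous_const _ _ ρ.toUniformSpace.toTopologicalSpace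
          ρ.toUniformSpace.toTopologicalSpace ⟨a, hab'⟩)
    rw [hρ] at hdc
    have : (({b}ᶜ : Set X)).restrict f = fun q => min ε (@dist _ ρ.toDist q ⟨a, hab'⟩) := by
      funext q
      show f q.1 = _
      rw [hf]; dsimp only; rw [dif_pos q.2]
    rw [this]
    exact continuous_const.min hdc
  have hfc : Continuous f := by
    rw [continuous_iff_continuousAt]
    intro x
    by_cases hxb : x = b
    · subst hxb
      exact (continuousOn_const.congr hfB).continuousAt (hB.mem_nhds hbB)
    · have hx' : x ∈ ({b}ᶜ : Set X) := fun hh => hxb (mem_singleton_iff.1 hh)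
      exact (continuousOn_iff_continuous_restrict.2 hrest).continuousAt
        (((hT1 b).isOpen_compl).mem_nhds hx')
  -- sublevel sets of f form a neighborhood basis at a
  have hbasis : ∀ V ∈ 𝓝 a, ∃ r > 0, f ⁻¹' Set.Iio r ⊆ V := by
    intro V hV
    obtain ⟨V', hV'sub, hV'open, haV'⟩ := mem_nhds_iff.1 hV
    have hpre' : @IsOpen _ ρ.toUniformSpace.toTopologicalSpace
        ((Subtype.val : ({b}ᶜ : Set X) → X) ⁻¹' V') := by
      rw [hρ]; exact hV'open.preimage continuous_subtype_val
    obtain ⟨s, s0, hball'⟩ := (@Metric.isOpen_iff _ ρ.toPseudoMetricSpace _).1 hpre' ⟨a, hab'⟩ haV'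
    refine ⟨min s ε, lt_min s0 ε0, fun y hy => ?_⟩
    simp only [mem_preimage, mem_Iio] at hy
    have hyb : y ∈ ({b}ᶜ : Set X) := by
      intro hh
      rw [mem_singleton_iff.1 hh] at hy
      rw [hf] at hy; dsimp only at hy
      rw [dif_neg (fun hh' => hh' rfl)] at hy
      exact absurd hy (not_lt.2 (min_le_right _ _))
    rw [hf] at hy; dsimp only at hy; rw [dif_pos hyb] at hy
    have hd : @dist _ ρ.toDist ⟨y, hyb⟩ ⟨a, hab'⟩ < s := by
      rcases min_lt_iff.1 hy with h1 | h1
      · exact absurd h1 (not_lt.2 (le_trans (min_le_right _ _) (le_refl ε)))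
      · exact lt_of_lt_of_le h1 (min_le_left _ _)
    have : (⟨y, hyb⟩ : ({b}ᶜ : Set X)) ∈ @Metric.ball _ ρ.toPseudoMetricSpace ⟨a, hab'⟩ s := hd
    exact hV'sub (hball' this)
  obtain ⟨m, hm, hcomp⟩ := h a
  exact extension (hT1 a) m hm hcomp f hfc hf0 hfa hfa' hbasis

end Main

theorem completelyMetrizable_reconstructible (X : Type u) [TopologicalSpace X]
    (hcard : 3 ≤ Cardinal.mk X) :
    IsCompletelyMetrizable X ↔ ∀ x : X, IsCompletelyMetrizable ({x}ᶜ : Set X) :=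
  ⟨fun h x => icm_card h x, fun h => bwd hcard h⟩
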